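/- Let y, m, v_s, v_t be complex numbers with v_s ≠ 0 and v_t ≠ 0, and suppose Im(v_s · conj(v_t) · conj(y)) > 0, Im(m · conj(y)) < 0, and Im(v_s · conj(v_t) · conj(m)) ≠ 0. Then there exist real numbers a, b, c such that the 2×2 complex Hermitian matrix H with entries H₁₁ = a + c·Re(y), H₁₂ = m − (c/2)·y, H₂₁ = conj(m) − (c/2)·conj(y), H₂₂ = b satisfies: (i) H · (v_s, v_t)ᵀ = 0, (ii) H is positive semidefinite, and (iii) the kernel of H is exactly the one-dimensional span of the vector (v_s, v_t) ∈ ℂ². -/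

import Mathlib

open Matrix ComplexOrder

theorem stmt_3 (y m vs vt : ℂ) (hvs : vs ≠ 0) (hvt : vt ≠ 0)
    (h1 : 0 < (vs * star vt * star y).im)
    (h2 : (m * star y).im < 0)
    (h3 : (vs * star vt * star m).im ≠ 0) :
    ∃ a b c : ℝ,
      let H : Matrix (Fin 2) (Fin 2) ℂ :=
        Matrix.of ![![(a : ℂ) + (c : ℂ) * (y.re : ℂ), m - ((c : ℂ) / 2) * y],
                    ![star m - ((c : ℂ) / 2) * star y, (b : ℂ)]]
      H *ᵥ ![vs, vt] = 0 ∧ H.PosSemidef ∧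
        (∀ x : Fin 2 → ℂ, H *ᵥ x = 0 ↔ ∃ d : ℂ, x = d • ![vs, vt]) := by
  set w : ℂ := vs * star vt with hw
  set d : ℝ := (w * star y).im with hdd
  have hd0 : 0 < d := h1
  have hdne : (d : ℂ) ≠ 0 := by exact_mod_cast hd0.ne'
  set k : ℝ := -((m * star y).im) / d with hkd
  have hk0 : 0 < k := div_pos (by linarith) hd0
  have hkne : (k : ℂ) ≠ 0 := by exact_mod_cast hk0.ne'
  set c : ℝ := -2 * ((m * star w).im) / d with hcd
  have key : (d : ℂ) * m
      = ((m * star y).im : ℂ) * w - ((m * star w).im : ℂ) * y := by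
    rw [hdd]
    apply Complex.ext <;>
      simp [Complex.mul_re, Complex.mul_im, Complex.sub_re, Complex.sub_im] <;> ring
  have e1 : (c : ℂ) * (d : ℂ) = -2 * ((m * star w).im : ℂ) := by
    rw [hcd]; push_cast; field_simp
  have e2 : (k : ℂ) * (d : ℂ) = -((m * star y).im : ℂ) := by
    rw [hkd]; push_cast; field_simp
  have hm : m - ((c : ℂ) / 2) * y = -(k : ℂ) * w := by
    have hm' : (d : ℂ) * (m - ((c : ℂ) / 2) * y) = (d : ℂ) * (-(k : ℂ) * w) := by
      linear_combination key - (y / 2) * e1 + w * e2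
    exact mul_left_cancel₀ hdne hm'
  have hm2 : star m - ((c : ℂ) / 2) * star y = -(k : ℂ) * (star vs * vt) := by
    have hst : star m - ((c : ℂ) / 2) * star y = star (m - ((c : ℂ) / 2) * y) := by
      simp [star_sub, star_mul', Complex.star_def, map_div₀, Complex.conj_ofReal]
    rw [hst, hm]
    simp [star_mul', hw, Complex.star_def, Complex.conj_ofReal]
  set a : ℝ := k * Complex.normSq vt - c * y.re with ha
  set b : ℝ := k * Complex.normSq vs with hb
  have ha11 : (a : ℂ) + (c : ℂ) * (y.re : ℂ) = (k : ℂ) * (vt * star vt) := by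
    rw [ha, Complex.star_def, Complex.mul_conj]; push_cast; ring
  have hb22 : ((b : ℝ) : ℂ) = (k : ℂ) * (vs * star vs) := by
    rw [hb, Complex.star_def, Complex.mul_conj]; push_cast; ring
  clear_value a b
  rw [hw] at hm
  clear hdd hkd hcd ha hb e1 e2 key hw
  clear_value w d k c
  have hHx : ∀ x : Fin 2 → ℂ,
      (Matrix.of ![![(a : ℂ) + (c : ℂ) * (y.re : ℂ), m - ((c : ℂ) / 2) * y],
                   ![star m - ((c : ℂ) / 2) * star y, (b : ℂ)]]) *ᵥ x
        = ((k : ℂ) * (vt * x 0 - vs * x 1)) • ![star vt, -star vs] := by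
    intro x
    funext i
    fin_cases i
    · simp only [Matrix.mulVec, dotProduct, Fin.sum_univ_two,
        Matrix.of_apply, Matrix.cons_val', Matrix.cons_val_zero, Matrix.cons_val_one,
        Matrix.head_cons, Matrix.empty_val', Matrix.cons_val_fin_one,
        Pi.smul_apply, smul_eq_mul]
      rw [ha11, hm]
      simp only [Fin.mk_zero, Fin.mk_one, Matrix.cons_val_zero, Matrix.cons_val_one,
        Matrix.head_cons, Matrix.vecHead]
      ring
    · simp only [Matrix.mulVec, dotProduct, Fin.sum_univ_two,
        Matrix.of_apply, Matrix.cons_val', Matrix.cons_val_zero, Matrix.cons_val_one,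
        Matrix.head_cons, Matrix.empty_val', Matrix.cons_val_fin_one,
        Pi.smul_apply, smul_eq_mul, Pi.neg_apply]
      rw [hm2, hb22]
      simp only [Fin.mk_zero, Fin.mk_one, Matrix.cons_val_zero, Matrix.cons_val_one,
        Matrix.head_cons, Matrix.vecHead]
      ring
  refine ⟨a, b, c, ?_, ?_, ?_⟩
  · -- H *ᵥ ![vs, vt] = 0
    rw [hHx]
    have hz : (k : ℂ) * (vt * (![vs, vt]) 0 - vs * (![vs, vt]) 1) = 0 := by
      simp only [Matrix.cons_val_zero, Matrix.cons_val_one, Matrix.head_cons]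
      ring
    rw [hz, zero_smul]
  · -- PosSemidef
    refine Matrix.PosSemidef.of_dotProduct_mulVec_nonneg ?_ ?_
    · ext i j
      fin_cases i <;> fin_cases j <;>
        simp [Matrix.conjTranspose_apply, Complex.star_def, map_div₀,
          Complex.conj_ofReal, star_sub, star_mul', map_sub, _root_.map_mul, map_add]
    · intro x
      rw [hHx x]
      have hdot : star x ⬝ᵥ ((k : ℂ) * (vt * x 0 - vs * x 1)) • ![star vt, -star vs]
          = (k : ℂ) * ((vt * x 0 - vs * x 1) * star (vt * x 0 - vs * x 1)) := by
        simp [dotProduct, Fin.sum_univ_two, star_sub, star_mul']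
        ring
      rw [hdot, Complex.star_def, Complex.mul_conj, ← Complex.ofReal_mul]
      exact Complex.zero_le_real.2 (mul_nonneg hk0.le (Complex.normSq_nonneg _))
  · -- kernel characterization
    intro x
    constructor
    · intro hx
      rw [hHx x] at hx
      have h0 := congrFun hx 0
      simp only [Pi.smul_apply, smul_eq_mul, Matrix.cons_val_zero, Pi.zero_apply] at h0
      have hq : vt * x 0 - vs * x 1 = 0 := by
        rcases mul_eq_zero.1 h0 with h | h
        · rcases mul_eq_zero.1 h with h' | h'
          · exact absurd h' hkne
          · exact h'
        · exact absurd h (star_ne_zero.mpr hvt)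
      refine ⟨x 0 / vs, ?_⟩
      funext i
      fin_cases i
      · simp only [Fin.mk_zero, Pi.smul_apply, smul_eq_mul, Matrix.cons_val_zero]
        field_simp
      · simp only [Fin.mk_one, Pi.smul_apply, smul_eq_mul, Matrix.cons_val_one, Matrix.head_cons,
          Matrix.cons_val_zero]
        field_simp
        linear_combination -hq
    · rintro ⟨e, rfl⟩
      rw [hHx]
      have hz : (k : ℂ) * (vt * (e • ![vs, vt]) 0 - vs * (e • ![vs, vt]) 1) = 0 := by
        simp only [Pi.smul_apply, smul_eq_mul, Matrix.cons_val_zero, Matrix.cons_val_one,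
          Matrix.head_cons]
        ring
      rw [hz, zero_smul]
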